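/- Let F be a field, q ∈ F, and d ∈ ℕ. Then the set {f : ℕ → F | 𝔇_d f = 0} of Gaussian polynomial functions of degree at most d is an F-linear subspace of the space of all functions ℕ → F, and its dimension over F is exactly d + 1. -/

import Mathlib

/-- The operator `(D_j f)(n) = f(n+1) − q^j·f(n)`. -/
def Dop {R : Type*} [CommRing R] (q : R) (j : ℕ) (f : ℕ → R) : ℕ → R :=
  fun n => f (n + 1) - q ^ j * f n

/-- The operator `𝔇_d = D_0 ∘ D_1 ∘ ⋯ ∘ D_d`; a function `f : ℕ → R` is a Gaussian
polynomial function of degree at most `d` if `𝔇_d f = 0`. -/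
def Dfull {R : Type*} [CommRing R] (q : R) : ℕ → (ℕ → R) → (ℕ → R)
  | 0 => Dop q 0
  | d + 1 => Dfull q d ∘ Dop q (d + 1)

section Aux
variable {F : Type*} [Field F] (q : F)

lemma Dfull_sub (d : ℕ) (f g : ℕ → F) (n : ℕ)
    (h : ∀ i ≤ d, f (n + i) = g (n + i)) :
    Dfull q d f n - Dfull q d g n = f (n + d + 1) - g (n + d + 1) := by
  induction d generalizing f g with
  | zero =>
    simp only [Dfull, Dop]
    have h0 := h 0 le_rfl
    simp only [Nat.add_zero] at h0
    rw [h0]; ring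
  | succ d ih =>
    have key := ih (Dop q (d + 1) f) (Dop q (d + 1) g) ?_
    · simp only [Dfull, Function.comp_apply]
      rw [key]
      simp only [Dop]
      have := h (d + 1) le_rfl
      rw [show n + (d + 1) = n + d + 1 by ring] at this
      rw [show n + d + 1 + 1 = n + (d + 1) + 1 by ring, this]
      ring
    · intro i hi
      simp only [Dop]
      have h1 := h i (le_trans hi (Nat.le_succ d))
      have h2 := h (i + 1) (by omega)
      rw [show n + (i + 1) = n + i + 1 by ring] at h2
      rw [h1, h2]

lemma Dfull_zero_fun (d : ℕ) : Dfull q d (0 : ℕ → F) = 0 := by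
  induction d with
  | zero => funext n; simp [Dfull, Dop]
  | succ d ih =>
    have : Dop q (d + 1) (0 : ℕ → F) = 0 := by funext n; simp [Dop]
    simp only [Dfull, Function.comp_apply]
    funext n
    rw [this]
    exact congrFun ih n

lemma Dop_add (j : ℕ) (f g : ℕ → F) : Dop q j (f + g) = Dop q j f + Dop q j g := by
  funext n; simp [Dop]; ring

lemma Dop_smul (j : ℕ) (c : F) (f : ℕ → F) : Dop q j (c • f) = c • Dop q j f := by
  funext n; simp [Dop]; ring

lemma Dfull_add (d : ℕ) (f g : ℕ → F) :
    Dfull q d (f + g) = Dfull q d f + Dfull q d g := by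
  induction d generalizing f g with
  | zero => exact Dop_add q 0 f g
  | succ d ih =>
    simp only [Dfull, Function.comp_apply, Dop_add]
    exact ih _ _

lemma Dfull_smul (d : ℕ) (c : F) (f : ℕ → F) :
    Dfull q d (c • f) = c • Dfull q d f := by
  induction d generalizing f with
  | zero => exact Dop_smul q 0 c f
  | succ d ih =>
    simp only [Dfull, Function.comp_apply, Dop_smul]
    exact ih _

/-- recursive extension of first `d+1` values to a Gaussian polynomial function -/
def ext (d : ℕ) (v : Fin (d + 1) → F) : ℕ → F
  | n =>
    if h : n ≤ d then v ⟨n, by omega⟩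
    else - Dfull q d (fun m => if hm : m < n then ext d v m else 0) (n - (d + 1))
termination_by n => n
decreasing_by exact hm

lemma ext_le (d : ℕ) (v : Fin (d + 1) → F) (n : ℕ) (h : n ≤ d) :
    ext q d v n = v ⟨n, by omega⟩ := by
  rw [ext]; simp [h]

lemma Dfull_ext (d : ℕ) (v : Fin (d + 1) → F) :
    Dfull q d (ext q d v) = 0 := by
  funext n
  set f₀ : ℕ → F := fun m => if hm : m < n + d + 1 then ext q d v m else 0 with hf₀
  have hextN : ext q d v (n + d + 1) = - Dfull q d f₀ n := by
    rw [ext]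
    have h1 : ¬ (n + d + 1 ≤ d) := by omega
    rw [dif_neg h1, show n + d + 1 - (d + 1) = n from by omega]
  have key := Dfull_sub q d (ext q d v) f₀ n (by
    intro i hi
    have : n + i < n + d + 1 := by omega
    simp only [hf₀]; rw [dif_pos this])
  have hz : f₀ (n + d + 1) = 0 := dif_neg (by omega)
  rw [hz, hextN] at key
  have : Dfull q d (ext q d v) n = 0 := by linear_combination key
  simpa using this

lemma Dfull_unique (d : ℕ) (f : ℕ → F) (hf : Dfull q d f = 0)
    (h0 : ∀ i, i ≤ d → f i = 0) : f = 0 := by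
  funext n
  induction n using Nat.strong_induction_on with
  | _ n ih =>
    by_cases h : n ≤ d
    · exact h0 n h
    · have key := Dfull_sub q d f 0 (n - (d + 1)) (by
        intro i hi
        have : n - (d + 1) + i < n := by omega
        simpa using ih _ this)
      rw [hf, Dfull_zero_fun] at key
      simp only [Pi.zero_apply, sub_zero, zero_sub, neg_zero, sub_self] at key
      have hn : n - (d + 1) + d + 1 = n := by omega
      rw [hn] at key
      simp [← key]

end Aux


/-- The set of Gaussian polynomial functions of degree at most `d` is an `F`-linear
subspace of `ℕ → F` of dimension exactly `d + 1`. -/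
theorem gaussian_subspace_dim {F : Type*} [Field F] (q : F) (d : ℕ) :
    ∃ W : Submodule F (ℕ → F), (W : Set (ℕ → F)) = {f : ℕ → F | Dfull q d f = 0} ∧
      Module.finrank F W = d + 1 := by
  set W : Submodule F (ℕ → F) :=
    { carrier := {f : ℕ → F | Dfull q d f = 0}
      add_mem' := fun {f g} hf hg => by
        simp only [Set.mem_setOf_eq] at *
        rw [Dfull_add, hf, hg, add_zero]
      zero_mem' := by
        simp only [Set.mem_setOf_eq]
        exact Dfull_zero_fun q d
      smul_mem' := fun c f hf => by
        simp only [Set.mem_setOf_eq] at *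
        rw [Dfull_smul, hf, smul_zero] } with hW
  refine ⟨W, rfl, ?_⟩
  -- evaluation map
  let E : W →ₗ[F] (Fin (d + 1) → F) :=
    { toFun := fun f i => (f : ℕ → F) i
      map_add' := fun f g => rfl
      map_smul' := fun c f => rfl }
  have hE : Function.Bijective E := by
    constructor
    · intro f g hfg
      apply Subtype.ext
      have h1 : ((f : ℕ → F) - (g : ℕ → F)) = 0 := by
        apply Dfull_unique q d
        · rw [sub_eq_add_neg, show -(g : ℕ → F) = (-1 : F) • (g : ℕ → F) by
            funext m; simp, Dfull_add, Dfull_smul, f.2, g.2]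
          simp
        · intro i hi
          have := congrFun hfg ⟨i, by omega⟩
          exact sub_eq_zero.mpr this
      funext m
      have := congrFun h1 m
      simpa [sub_eq_zero] using this
    · intro v
      refine ⟨⟨ext q d v, Dfull_ext q d v⟩, ?_⟩
      funext i
      exact ext_le q d v i (by omega)
  have equiv := LinearEquiv.ofBijective E hE
  rw [equiv.finrank_eq]
  simp [Module.finrank_pi]
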